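/- Let ⟨A, B, Q, q0, δ⟩ be a colorless deterministic concurrent arena and let q ∈ Q be a state that is strongly reachable from q0 and whose local interaction F_q = ⟨A, B, Q, δ(q,·,·)⟩ is not determined. Then there exist a non-empty set of colors K, a coloring function col : Q × Q → K, and an objective W ⊆ K^ω that is open (a union of cylinder sets), such that in the resulting deterministic concurrent game ⟨⟨A,B,Q,q0,δ,K,col⟩, W⟩ neither player has a winning color strategy. -/
import Mathlib


open MeasureTheory
open scoped Classical

universe u

/-- The cylinder set generated by a finite word. -/
def Cyl {K : Type u} (w : List K) : Set (ℕ → K) :=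
  {ρ | ∀ i : ℕ, ∀ h : i < w.length, ρ i = w.get ⟨i, h⟩}

/-- The σ-algebra on `ℕ → K` generated by cylinder sets. -/
def BorelSeq (K : Type u) : MeasurableSpace (ℕ → K) :=
  MeasurableSpace.generateFrom {s | ∃ w : List K, s = Cyl w}

/-- A game form (given by its outcome function `ρ : S_A → S_B → O`) is determined if
for every subset `V` of outcomes, either Player A can force the outcome into `V`,
or Player B can force it out of `V`. -/
def GFDetermined {SA SB O : Type u} (ρ : SA → SB → O) : Prop :=
  ∀ V : Set O, (∃ a, ∀ b, ρ a b ∈ V) ∨ (∃ b, ∀ a, ρ a b ∉ V)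

/-- The color history `col(π_0,π_1) ⋯ col(π_{n-1},π_n)` of a play prefix. -/
def colorHist {Q K : Type u} (col : Q → Q → K) (π : ℕ → Q) (n : ℕ) : List K :=
  List.ofFn (fun i : Fin n => col (π i) (π (i + 1)))

/-- The color sequence of an infinite play. -/
def colorSeq {Q K : Type u} (col : Q → Q → K) (π : ℕ → Q) : ℕ → K :=
  fun n => col (π n) (π (n + 1))

/-- `π` is a play consistent with Player A's color strategy `sA`. -/
def PlayA {A B Q K : Type u} (q0 : Q) (δ : Q → A → B → Q) (col : Q → Q → K)
    (sA : List K → Q → A) (π : ℕ → Q) : Prop :=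
  π 0 = q0 ∧ ∀ n, ∃ b, π (n + 1) = δ (π n) (sA (colorHist col π n) (π n)) b

/-- `π` is a play consistent with Player B's color strategy `sB`. -/
def PlayB {A B Q K : Type u} (q0 : Q) (δ : Q → A → B → Q) (col : Q → Q → K)
    (sB : List K → Q → B) (π : ℕ → Q) : Prop :=
  π 0 = q0 ∧ ∀ n, ∃ a, π (n + 1) = δ (π n) a (sB (colorHist col π n) (π n))

/-- Player A's color strategy `sA` is winning for objective `W`. -/
def WinA {A B Q K : Type u} (q0 : Q) (δ : Q → A → B → Q) (col : Q → Q → K)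
    (W : Set (ℕ → K)) (sA : List K → Q → A) : Prop :=
  ∀ π : ℕ → Q, PlayA q0 δ col sA π → colorSeq col π ∈ W

/-- Player B's color strategy `sB` is winning for the objective complementary to `W`. -/
def WinB {A B Q K : Type u} (q0 : Q) (δ : Q → A → B → Q) (col : Q → Q → K)
    (W : Set (ℕ → K)) (sB : List K → Q → B) : Prop :=
  ∀ π : ℕ → Q, PlayB q0 δ col sB π → colorSeq col π ∉ W

/-- The sets `R_i^q` used to define strong reachability: `R_0^q = {q}` and
`R_{i+1}^q` adds the states from which one of the players can force the next
state into `R_i^q`. -/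
def strongReach {A B Q : Type u} (δ : Q → A → B → Q) (q : Q) : ℕ → Set Q
  | 0 => {q}
  | i + 1 => strongReach δ q i ∪
      {q' | (∃ a, ∀ b, δ q' a b ∈ strongReach δ q i) ∨
            (∃ b, ∀ a, δ q' a b ∈ strongReach δ q i)}

namespace Stmt4

variable {A B Q : Type u}

/-- rank-decrease relation : `y` has strictly smaller reachability rank than `x`. -/
def D (δ : Q → A → B → Q) (q x y : Q) : Prop :=
  ∃ i, y ∈ strongReach δ q i ∧ x ∉ strongReach δ q i

def Reach (δ : Q → A → B → Q) (q x : Q) : Prop := ∃ i, x ∈ strongReach δ q i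

noncomputable def rk (δ : Q → A → B → Q) (q x : Q) : ℕ :=
  sInf {i | x ∈ strongReach δ q i}

def Afor (δ : Q → A → B → Q) (q x : Q) : Prop := ∃ a, ∀ b, D δ q x (δ x a b)

def Bfor (δ : Q → A → B → Q) (q x : Q) : Prop :=
  ¬ Afor δ q x ∧ ∃ b, ∀ a, D δ q x (δ x a b)

def Dec (δ : Q → A → B → Q) (q : Q) (π : ℕ → Q) (m : ℕ) : Prop :=
  ∀ j < m, D δ q (π j) (π (j + 1))

def WinCond (δ : Q → A → B → Q) (q : Q) (V : Set Q) (π : ℕ → Q) : Prop :=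
  ∃ m, Dec δ q π m ∧
    ((π m = q ∧ π (m + 1) ∈ V) ∨ (Bfor δ q (π m) ∧ ¬ D δ q (π m) (π (m + 1))))

/-- reconstruct a play from its color sequence (colors = successor states). -/
def piOf (q0 : Q) (ρ : ℕ → Q) : ℕ → Q
  | 0 => q0
  | n + 1 => ρ n

theorem sr_mono (δ : Q → A → B → Q) (q : Q) : Monotone (strongReach δ q) :=
  monotone_nat_of_le_succ fun i => by
    show strongReach δ q i ⊆ strongReach δ q i ∪ _
    exact Set.subset_union_left

theorem q_mem_sr (δ : Q → A → B → Q) (q : Q) (i : ℕ) : q ∈ strongReach δ q i :=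
  sr_mono δ q (Nat.zero_le i) rfl

theorem not_D_q (δ : Q → A → B → Q) (q y : Q) : ¬ D δ q q y := by
  rintro ⟨i, _, hq⟩; exact hq (q_mem_sr δ q i)

theorem Bfor_ne [Nonempty A] (δ : Q → A → B → Q) {q x : Q} (h : Bfor δ q x) : x ≠ q := by
  rintro rfl
  obtain ⟨-, b, hb⟩ := h
  exact not_D_q δ x _ (hb (Classical.arbitrary A))

theorem rk_le (δ : Q → A → B → Q) {q x : Q} {i : ℕ} (h : x ∈ strongReach δ q i) :
    rk δ q x ≤ i := Nat.sInf_le h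

theorem mem_rk (δ : Q → A → B → Q) {q x : Q} (h : Reach δ q x) :
    x ∈ strongReach δ q (rk δ q x) := Nat.sInf_mem h

theorem rk_zero_eq (δ : Q → A → B → Q) {q x : Q} (h : Reach δ q x)
    (h0 : rk δ q x = 0) : x = q := by
  have := mem_rk δ h; rw [h0] at this; exact this

theorem D_desc (δ : Q → A → B → Q) {q x y : Q} (hx : Reach δ q x) (hD : D δ q x y) :
    Reach δ q y ∧ rk δ q y < rk δ q x := by
  obtain ⟨i, hy, hxn⟩ := hD
  refine ⟨⟨i, hy⟩, lt_of_le_of_lt (rk_le δ hy) ?_⟩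
  by_contra h
  exact hxn (sr_mono δ q (Nat.le_of_not_lt h) (mem_rk δ hx))

/-- a reachable state other than `q` is forcing for one of the players. -/
theorem force (δ : Q → A → B → Q) {q x : Q} (hx : Reach δ q x) (hne : x ≠ q) :
    Afor δ q x ∨ Bfor δ q x := by
  cases hr : rk δ q x with
  | zero => exact absurd (rk_zero_eq δ hx hr) hne
  | succ s =>
    have hmem := mem_rk δ hx
    rw [hr] at hmem
    have hns : x ∉ strongReach δ q s := fun h => by
      have := rk_le δ h; omega
    have : x ∈ strongReach δ q s ∪
        {q' | (∃ a, ∀ b, δ q' a b ∈ strongReach δ q s) ∨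
              (∃ b, ∀ a, δ q' a b ∈ strongReach δ q s)} := hmem
    rcases this with h | h
    · exact absurd h hns
    · rcases h with ⟨a, ha⟩ | ⟨b, hb⟩
      · exact Or.inl ⟨a, fun b => ⟨s, ha b, hns⟩⟩
      · by_cases hA : Afor δ q x
        · exact Or.inl hA
        · exact Or.inr ⟨hA, b, fun a => ⟨s, hb a, hns⟩⟩

theorem colorHist_succ {K : Type u} (col : Q → Q → K) (π : ℕ → Q) (n : ℕ) :
    colorHist col π (n + 1) = colorHist col π n ++ [col (π n) (π (n + 1))] := by
  unfold colorHist
  rw [List.ofFn_succ']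
  simp [List.concat_eq_append]

/-- iterated play construction carrying the color history. -/
noncomputable def iter (q0 : Q) (f : List Q → Q → Q) : ℕ → List Q × Q
  | 0 => ([], q0)
  | n + 1 =>
      ((iter q0 f n).1 ++ [f (iter q0 f n).1 (iter q0 f n).2],
        f (iter q0 f n).1 (iter q0 f n).2)

noncomputable def ply (q0 : Q) (f : List Q → Q → Q) (n : ℕ) : Q := (iter q0 f n).2

theorem ply_zero (q0 : Q) (f : List Q → Q → Q) : ply q0 f 0 = q0 := rfl

theorem iter_hist (q0 : Q) (f : List Q → Q → Q) (n : ℕ) :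
    (iter q0 f n).1 = colorHist (fun _ y => y) (ply q0 f) n := by
  induction n with
  | zero => simp [iter, colorHist]
  | succ n ih =>
    rw [colorHist_succ]
    show (iter q0 f n).1 ++ [(iter q0 f (n + 1)).2] = _
    rw [ih]
    rfl

theorem ply_succ (q0 : Q) (f : List Q → Q → Q) (n : ℕ) :
    ply q0 f (n + 1) =
      f (colorHist (fun _ y => y) (ply q0 f) n) (ply q0 f n) := by
  rw [← iter_hist]; rfl

theorem piOf_colorSeq (q0 : Q) (π : ℕ → Q) (h0 : π 0 = q0) :
    piOf q0 (colorSeq (fun _ y : Q => y) π) = π := by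
  funext n
  cases n with
  | zero => exact h0.symm
  | succ n => rfl

theorem mem_cyl_ofFn {K : Type u} (ρ : ℕ → K) (N : ℕ) :
    ρ ∈ Cyl (List.ofFn fun i : Fin N => ρ i) := by
  intro i h
  rw [List.get_ofFn]
  simp

theorem cyl_ofFn_agree {K : Type u} {ρ ρ' : ℕ → K} {N : ℕ}
    (h : ρ' ∈ Cyl (List.ofFn fun i : Fin N => ρ i)) {n : ℕ} (hn : n < N) :
    ρ' n = ρ n := by
  have hh : n < (List.ofFn fun i : Fin N => ρ i).length := by simpa using hn
  have := h n hh
  rw [List.get_ofFn] at this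
  simpa using this

end Stmt4

/-- If a state `q` with non-determined local interaction is strongly reachable from
the initial state of a colorless deterministic concurrent arena, then there are a
non-empty set of colors, a coloring function, and an open objective `W`
(a union of cylinder sets) such that neither player has a winning color strategy. -/
theorem stmt4 {A B Q : Type u} [Nonempty A] [Nonempty B] [Nonempty Q]
    (q0 : Q) (δ : Q → A → B → Q) (q : Q)
    (hreach : q0 ∈ ⋃ i : ℕ, strongReach δ q i)
    (hnd : ¬ GFDetermined (δ q)) :
    ∃ (K : Type u) (_ : Nonempty K) (col : Q → Q → K) (W : Set (ℕ → K))
      (S : Set (List K)),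
      W = ⋃ w ∈ S, Cyl w ∧
      (¬ ∃ sA : List K → Q → A, WinA q0 δ col W sA) ∧
      (¬ ∃ sB : List K → Q → B, WinB q0 δ col W sB) := by
  classical
  rw [GFDetermined] at hnd
  push_neg at hnd
  obtain ⟨V, hV1, hV2⟩ := hnd
  try simp only [not_not] at hV2
  rw [Set.mem_iUnion] at hreach
  set W : Set (ℕ → Q) := {ρ | Stmt4.WinCond δ q V (Stmt4.piOf q0 ρ)} with hW
  refine ⟨Q, ‹Nonempty Q›, fun _ y => y, W, {w | Cyl w ⊆ W}, ?_, ?_, ?_⟩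
  · -- openness
    ext ρ
    constructor
    · intro hρ
      obtain ⟨m, hdec, hdis⟩ := hρ
      have hsub : Cyl (List.ofFn fun i : Fin (m + 1) => ρ i) ⊆ W := by
        intro ρ' hρ'
        have key : ∀ k ≤ m + 1, Stmt4.piOf q0 ρ' k = Stmt4.piOf q0 ρ k := by
          intro k hk
          cases k with
          | zero => rfl
          | succ n => exact Stmt4.cyl_ofFn_agree hρ' (by omega)
        refine ⟨m, ?_, ?_⟩
        · intro j hj
          rw [key j (by omega), key (j + 1) (by omega)]
          exact hdec j hj
        · rw [key m (by omega), key (m + 1) (le_refl _)]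
          exact hdis
      exact Set.mem_biUnion hsub (Stmt4.mem_cyl_ofFn ρ (m + 1))
    · intro hρ
      obtain ⟨w, hw, hρ⟩ := Set.mem_iUnion₂.mp hρ
      exact hw hρ
  · -- Player A has no winning strategy
    rintro ⟨sA, hsA⟩
    set bC : Q → A → B := fun x a =>
      if hx : x = q then (hV1 a).choose
      else if h : Stmt4.Bfor δ q x then h.2.choose
      else Classical.arbitrary B with hbC
    set f : List Q → Q → Q := fun h x => δ x (sA h x) (bC x (sA h x)) with hf
    set π : ℕ → Q := Stmt4.ply q0 f with hπ
    have hstep : ∀ n, π (n + 1) =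
        δ (π n) (sA (colorHist (fun _ y : Q => y) π n) (π n))
          (bC (π n) (sA (colorHist (fun _ y : Q => y) π n) (π n))) :=
      fun n => Stmt4.ply_succ q0 f n
    have hplay : PlayA q0 δ (fun _ y : Q => y) sA π :=
      ⟨rfl, fun n => ⟨_, hstep n⟩⟩
    have hmem := hsA π hplay
    rw [hW] at hmem
    have hfix : Stmt4.piOf q0 (colorSeq (fun _ y : Q => y) π) = π :=
      Stmt4.piOf_colorSeq q0 π rfl
    rw [Set.mem_setOf_eq, hfix] at hmem
    obtain ⟨m, hdec, hdis⟩ := hmem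
    set a := sA (colorHist (fun _ y : Q => y) π m) (π m) with ha
    rcases hdis with ⟨hq, hv⟩ | ⟨hB, hnD⟩
    · have hb : bC (π m) a = (hV1 a).choose := by
        simp only [hbC, hq]; exact dif_pos trivial
      have : π (m + 1) ∉ V := by
        rw [hstep m, ← ha, hb, hq]
        exact (hV1 a).choose_spec
      exact this hv
    · have hne := Stmt4.Bfor_ne δ hB
      have hb : bC (π m) a = hB.2.choose := by
        rw [hbC]; simp only [dif_neg hne, dif_pos hB]
      exact hnD (by rw [hstep m, ← ha, hb]; exact hB.2.choose_spec a)
  · -- Player B has no winning strategy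
    rintro ⟨sB, hsB⟩
    set aC : Q → B → A := fun x b =>
      if hx : x = q then (hV2 b).choose
      else if h : Stmt4.Afor δ q x then h.choose
      else if h : ∃ a, ¬ Stmt4.D δ q x (δ x a b) then h.choose
      else Classical.arbitrary A with haC
    set f : List Q → Q → Q := fun h x => δ x (aC x (sB h x)) (sB h x) with hf
    set π : ℕ → Q := Stmt4.ply q0 f with hπ
    have hstep : ∀ n, π (n + 1) =
        δ (π n) (aC (π n) (sB (colorHist (fun _ y : Q => y) π n) (π n)))
          (sB (colorHist (fun _ y : Q => y) π n) (π n)) :=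
      fun n => Stmt4.ply_succ q0 f n
    have hplay : PlayB q0 δ (fun _ y : Q => y) sB π :=
      ⟨rfl, fun n => ⟨_, hstep n⟩⟩
    have hq0 : π 0 = q0 := rfl
    have main : ∀ r j, Stmt4.Reach δ q (π j) → Stmt4.rk δ q (π j) ≤ r →
        Stmt4.Dec δ q π j → Stmt4.WinCond δ q V π := by
      intro r
      induction r with
      | zero =>
        intro j hre hrk hdec
        have hq : π j = q := Stmt4.rk_zero_eq δ hre (Nat.le_zero.mp hrk)
        refine ⟨j, hdec, Or.inl ⟨hq, ?_⟩⟩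
        set b := sB (colorHist (fun _ y : Q => y) π j) (π j) with hb
        have haq : aC (π j) b = (hV2 b).choose := by
          simp only [haC, hq]; exact dif_pos trivial
        rw [hstep j, ← hb, haq, hq]
        exact (hV2 b).choose_spec
      | succ r ih =>
        intro j hre hrk hdec
        by_cases hq : π j = q
        · refine ⟨j, hdec, Or.inl ⟨hq, ?_⟩⟩
          set b := sB (colorHist (fun _ y : Q => y) π j) (π j) with hb
          have haq : aC (π j) b = (hV2 b).choose := by
            simp only [haC, hq]; exact dif_pos trivial
          rw [hstep j, ← hb, haq, hq]
          exact (hV2 b).choose_spec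
        · set b := sB (colorHist (fun _ y : Q => y) π j) (π j) with hb
          have hdesc : Stmt4.D δ q (π j) (π (j + 1)) → Stmt4.WinCond δ q V π := by
            intro hD
            obtain ⟨hre', hlt⟩ := Stmt4.D_desc δ hre hD
            refine ih (j + 1) hre' (by omega) ?_
            intro j' hj'
            by_cases hlt' : j' < j
            · exact hdec j' hlt'
            · have : j' = j := by omega
              rw [this]; exact hD
          rcases Stmt4.force δ hre hq with hA | hB
          · have haq : aC (π j) b = hA.choose := by
              rw [haC]; simp only [dif_neg hq, dif_pos hA]
            exact hdesc (by rw [hstep j, ← hb, haq]; exact hA.choose_spec b)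
          · by_cases hex : ∃ a, ¬ Stmt4.D δ q (π j) (δ (π j) a b)
            · have haq : aC (π j) b = hex.choose := by
                rw [haC]; simp only [dif_neg hq, dif_neg hB.1, dif_pos hex]
              refine ⟨j, hdec, Or.inr ⟨hB, ?_⟩⟩
              rw [hstep j, ← hb, haq]
              exact hex.choose_spec
            · push_neg at hex
              exact hdesc (by rw [hstep j]; exact hex _)
    have hw : Stmt4.WinCond δ q V π := by
      obtain ⟨i, hi⟩ := hreach
      exact main (Stmt4.rk δ q q0) 0 ⟨i, by rw [hq0]; exact hi⟩
        (by rw [hq0]) (fun j hj => absurd hj (Nat.not_lt_zero j))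
    have := hsB π hplay
    rw [hW] at this
    exact this (by rw [Set.mem_setOf_eq, Stmt4.piOf_colorSeq q0 π rfl]; exact hw)
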